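/- Let f : ℝ → ℂ be in L²(ℝ), and define its quantum characteristic function χ : ℝ² → ℂ by χ(a, b) = ∫_ℝ conj(f(x)) · exp(i(b x − a b / 2)) · f(x − a) dx (this integral converges absolutely since f ∈ L²). Then χ is 1-positive definite: for every m ∈ ℕ and every choice of points ξ_k = (a_k, b_k) ∈ ℝ², k = 1, …, m, the m × m complex matrix M with entries M_{k,l} = exp(i (a_k b_l − a_l b_k)/2) · χ(a_l − a_k, b_l − b_k) is positive semidefinite. (This is the easy direction of the quantum Bochner theorem, assertion (i), for pure states: every characteristic function of a quantum state is 1-positive definite; the proof exhibits M as the Gram matrix of the vectors D(ξ_k) f.) -/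

import Mathlib

open MeasureTheory
open scoped BigOperators ComplexOrder

/-- The quantum Bochner theorem, easy direction, for pure states: the quantum characteristic
function `χ(a,b) = ⟨f, D(a,b) f⟩ = ∫ conj (f x) · exp(i(bx − ab/2)) · f(x − a) dx` of an
`L²` function `f` is `1`-positive definite: for all points `ξ_k = (a_k, b_k) ∈ ℝ²`, the matrix
with entries `M_{k,l} = exp(i(a_k b_l − a_l b_k)/2) · χ(a_l − a_k, b_l − b_k)` is positive
semidefinite. -/
theorem quantum_bochner_easy (f : ℝ → ℂ) (hf : MemLp f 2 (volume : Measure ℝ))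
    (χ : ℝ → ℝ → ℂ)
    (hχ : ∀ a b, χ a b =
      ∫ x : ℝ, (starRingEnd ℂ) (f x) * Complex.exp (Complex.I * (b * x - a * b / 2)) * f (x - a))
    (m : ℕ) (a b : Fin m → ℝ)
    (M : Matrix (Fin m) (Fin m) ℂ)
    (hM : ∀ k l, M k l =
      Complex.exp (Complex.I * ((a k * b l - a l * b k) / 2)) * χ (a l - a k) (b l - b k)) :
    M.PosSemidef := by
  classical
  -- the displaced functions
  set g : Fin m → ℝ → ℂ := fun k x =>
    Complex.exp (Complex.I * (b k * x - a k * b k / 2)) * f (x - a k) with hg_def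
  have hg : ∀ k, MemLp (g k) 2 (volume : Measure ℝ) := by
    intro k
    have htr : MemLp (fun x => f (x - a k)) 2 (volume : Measure ℝ) :=
      hf.comp_measurePreserving (measurePreserving_sub_right volume (a k))
    have hexp : AEStronglyMeasurable
        (fun x : ℝ => Complex.exp (Complex.I * (b k * x - a k * b k / 2))) volume := by
      exact (Complex.continuous_exp.comp (by continuity)).aestronglyMeasurable
    refine MemLp.of_le htr (hexp.mul htr.1) ?_
    filter_upwards with x
    rw [hg_def]
    simp only [norm_mul]
    have : ‖Complex.exp (Complex.I * (b k * x - a k * b k / 2))‖ = 1 := by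
      rw [mul_comm]
      simpa using Complex.norm_exp_ofReal_mul_I (b k * x - a k * b k / 2)
    rw [this, one_mul]
  set G : Fin m → Lp ℂ 2 (volume : Measure ℝ) := fun k => (hg k).toLp (g k) with hG_def
  -- the key Gram identity
  have key : ∀ k l, M k l = inner ℂ (G k) (G l) := by
    intro k l
    rw [MeasureTheory.L2.inner_def]
    have hcong : ∫ x, inner ℂ ((G k : ℝ → ℂ) x) ((G l : ℝ → ℂ) x) ∂(volume : Measure ℝ)
        = ∫ x, (starRingEnd ℂ) (g k x) * g l x := by
      apply integral_congr_ae
      filter_upwards [(hg k).coeFn_toLp, (hg l).coeFn_toLp] with x hk hl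
      simp only [hG_def]
      rw [hk, hl, RCLike.inner_apply, mul_comm]
    rw [hcong, hM k l, hχ]
    have hshift : (∫ x : ℝ, (starRingEnd ℂ) (g k x) * g l x)
        = ∫ x : ℝ, (starRingEnd ℂ) (g k (x - (- a k))) * g l (x - (- a k)) := by
      rw [integral_sub_right_eq_self (fun x => (starRingEnd ℂ) (g k x) * g l x) (- a k)]
    rw [hshift, ← MeasureTheory.integral_const_mul]
    apply integral_congr_ae
    filter_upwards with x
    simp only [hg_def, sub_neg_eq_add, map_mul]
    rw [← Complex.exp_conj]
    rw [show ((b k : ℂ) * (↑(x + a k)) - ↑(a k) * ↑(b k) / 2)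
        = ((b k * (x + a k) - a k * b k / 2 : ℝ) : ℂ) by push_cast; ring]
    rw [map_mul, Complex.conj_I, Complex.conj_ofReal]
    rw [show x + a k - a k = x by ring, show x + a k - a l = x - (a l - a k) by ring]
    have hE : Complex.exp (Complex.I * ((↑(a k) * ↑(b l) - ↑(a l) * ↑(b k)) / 2)) *
        Complex.exp (Complex.I * (↑(b l - b k) * ↑x - ↑(a l - a k) * ↑(b l - b k) / 2)) =
        Complex.exp (-Complex.I * ((b k * (x + a k) - a k * b k / 2 : ℝ) : ℂ)) *
        Complex.exp (Complex.I * (↑(b l) * ↑(x + a k) - ↑(a l) * ↑(b l) / 2)) := by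
      rw [← Complex.exp_add, ← Complex.exp_add]
      congr 1
      push_cast
      ring
    linear_combination ((starRingEnd ℂ) (f x) * f (x - (a l - a k))) * hE
  rw [Matrix.posSemidef_iff_dotProduct_mulVec]
  constructor
  · ext i j
    rw [Matrix.conjTranspose_apply, key i j, key j i, RCLike.star_def, inner_conj_symm]
  · intro x
    have hdp : dotProduct (star x) (M.mulVec x)
        = inner ℂ (∑ k, x k • G k) (∑ l, x l • G l) := by
      rw [sum_inner]
      simp only [inner_sum, inner_smul_left, inner_smul_right, RCLike.star_def,
        dotProduct, Matrix.mulVec, Pi.star_apply]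
      refine Finset.sum_congr rfl fun k _ => ?_
      rw [Finset.mul_sum]
      refine Finset.sum_congr rfl fun l _ => ?_
      rw [key]
      ring
    rw [hdp, Complex.nonneg_iff]
    constructor
    · rw [← RCLike.re_to_complex]
      exact inner_self_nonneg
    · rw [← RCLike.im_to_complex]
      exact (inner_self_im _).symm
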